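/- Let a > 0 and let f : ℝ → ℂ be a Schwartz function. Then for every z ∈ ℂ, [B_{a/2}( f′ )](z) = (B_{a/2}f)′(z) − (a/2)·z·(B_{a/2}f)(z), where f′ is the derivative of f and (B_{a/2}f)′ denotes the complex derivative of the entire function B_{a/2}f. -/

import Mathlib

open Complex Real SchwartzMap

/-- The (parametrized) Bargmann transform `B_{a/2}`:
`(B_{a/2}f)(z) = (a/π)^{1/4} ∫_ℝ f(x) e^{axz − (a/2)x² − (a/4)z²} dx`. -/
noncomputable def bargmann (a : ℝ) (f : ℝ → ℂ) (z : ℂ) : ℂ :=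
  ((a / Real.pi) ^ ((1 : ℝ) / 4) : ℝ) *
    ∫ x : ℝ, f x * Complex.exp (a * x * z - (a / 2) * x ^ 2 - (a / 4) * z ^ 2)

open MeasureTheory Filter Metric

noncomputable section

/-- kernel of the Bargmann transform -/
def bk (a : ℝ) (x : ℝ) (w : ℂ) : ℂ :=
  Complex.exp ((a : ℂ) * x * w - (a : ℂ) / 2 * (x : ℂ) ^ 2 - (a : ℂ) / 4 * w ^ 2)

lemma norm_bk_le (a : ℝ) (ha : 0 < a) (x : ℝ) (w : ℂ) :
    ‖bk a x w‖ ≤ Real.exp (a * ‖w‖ * |x| - a / 2 * x ^ 2 + a / 4 * ‖w‖ ^ 2) := by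
  have heq : (a : ℂ) * x * w - (a : ℂ) / 2 * (x : ℂ) ^ 2 - (a : ℂ) / 4 * w ^ 2
      = ((a * x : ℝ) : ℂ) * w + ((-(a / 2) * x ^ 2 : ℝ) : ℂ) + ((-(a / 4) : ℝ) : ℂ) * w ^ 2 := by
    push_cast; ring
  rw [bk, heq, Complex.norm_exp]
  apply Real.exp_le_exp.2
  have hre : (((a * x : ℝ) : ℂ) * w + ((-(a / 2) * x ^ 2 : ℝ) : ℂ)
      + ((-(a / 4) : ℝ) : ℂ) * w ^ 2).re
      = a * x * w.re + (-(a / 2) * x ^ 2) + (-(a / 4)) * (w.re * w.re - w.im * w.im) := by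
    simp [Complex.add_re, Complex.mul_re, pow_two]
  rw [hre]
  have hx : x * w.re ≤ |x| * ‖w‖ := by
    calc x * w.re ≤ |x * w.re| := le_abs_self _
      _ = |x| * |w.re| := abs_mul _ _
      _ ≤ |x| * ‖w‖ := by
          apply mul_le_mul_of_nonneg_left _ (abs_nonneg x)
          simpa using Complex.abs_re_le_norm w
  have him2 : w.im ^ 2 ≤ ‖w‖ ^ 2 := by
    rw [← _root_.sq_abs]
    apply pow_le_pow_left₀ (abs_nonneg _)
    simpa using Complex.abs_im_le_norm w
  have h1 : a * (x * w.re) ≤ a * (|x| * ‖w‖) := mul_le_mul_of_nonneg_left hx ha.le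
  have h2 : a / 4 * w.im ^ 2 ≤ a / 4 * ‖w‖ ^ 2 :=
    mul_le_mul_of_nonneg_left him2 (by positivity)
  nlinarith [sq_nonneg w.re, ha.le]

lemma integrable_aux {c : ℝ} (hc : 0 < c) (B : ℝ) :
    Integrable (fun x : ℝ => (1 + |x|) * Real.exp (B * |x| - c * x ^ 2)) := by
  have h1 : Integrable (fun x : ℝ =>
      Real.exp ((B + 1) ^ 2 / (2 * c)) * Real.exp (-(c / 2) * x ^ 2)) :=
    (integrable_exp_neg_mul_sq (by positivity : (0:ℝ) < c / 2)).const_mul _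
  refine h1.mono' ?_ ?_
  · apply Continuous.aestronglyMeasurable
    fun_prop
  · filter_upwards with x
    rw [Real.norm_of_nonneg (by positivity)]
    have h2 : 1 + |x| ≤ Real.exp |x| := by
      have := Real.add_one_le_exp |x|; linarith
    have hdiv : (B + 1) * |x| - c / 2 * x ^ 2 ≤ (B + 1) ^ 2 / (2 * c) := by
      rw [le_div_iff₀ (by positivity : (0:ℝ) < 2 * c), ← _root_.sq_abs x]
      nlinarith [sq_nonneg (c * |x| - (B + 1))]
    calc (1 + |x|) * Real.exp (B * |x| - c * x ^ 2)
        ≤ Real.exp |x| * Real.exp (B * |x| - c * x ^ 2) :=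
          mul_le_mul_of_nonneg_right h2 (Real.exp_nonneg _)
      _ = Real.exp ((B + 1) * |x| - c * x ^ 2) := by rw [← Real.exp_add]; ring_nf
      _ ≤ Real.exp ((B + 1) ^ 2 / (2 * c)) * Real.exp (-(c / 2) * x ^ 2) := by
          rw [← Real.exp_add]
          apply Real.exp_le_exp.2
          nlinarith [hdiv]

lemma norm_term_le (a : ℝ) (ha : 0 < a) (g : SchwartzMap ℝ ℂ) (c₀ c₁ : ℂ) (x : ℝ) (w : ℂ)
    {R : ℝ} (hw : ‖w‖ ≤ R) {k₀ k₁ : ℝ} (hk₀ : ‖c₀‖ ≤ k₀) (hk₁ : ‖c₁‖ ≤ k₁) :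
    ‖g x * ((c₀ + c₁ * x) * bk a x w)‖
      ≤ ((SchwartzMap.seminorm ℝ 0 0 g) * (k₀ + k₁) * Real.exp (a / 4 * R ^ 2))
        * ((1 + |x|) * Real.exp (a * R * |x| - a / 2 * x ^ 2)) := by
  have hR : 0 ≤ R := le_trans (norm_nonneg w) hw
  have hM := g.norm_le_seminorm ℝ x
  have h1 : ‖c₀ + c₁ * (x : ℂ)‖ ≤ (k₀ + k₁) * (1 + |x|) := by
    have := norm_add_le c₀ (c₁ * (x : ℂ))
    have h2 : ‖c₁ * (x : ℂ)‖ = ‖c₁‖ * |x| := by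
      rw [norm_mul, Complex.norm_real, Real.norm_eq_abs]
    nlinarith [norm_nonneg c₀, norm_nonneg c₁, abs_nonneg x, norm_nonneg (c₁ * (x : ℂ))]
  have h3 : ‖bk a x w‖ ≤ Real.exp (a * R * |x| - a / 2 * x ^ 2 + a / 4 * R ^ 2) := by
    refine (norm_bk_le a ha x w).trans (Real.exp_le_exp.2 ?_)
    have e1 : a * ‖w‖ * |x| ≤ a * R * |x| := by
      apply mul_le_mul_of_nonneg_right _ (abs_nonneg x)
      exact mul_le_mul_of_nonneg_left hw ha.le
    have e2 : a / 4 * ‖w‖ ^ 2 ≤ a / 4 * R ^ 2 := by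
      apply mul_le_mul_of_nonneg_left _ (by positivity)
      exact pow_le_pow_left₀ (norm_nonneg w) hw 2
    linarith
  calc ‖g x * ((c₀ + c₁ * x) * bk a x w)‖
      = ‖g x‖ * (‖c₀ + c₁ * (x : ℂ)‖ * ‖bk a x w‖) := by rw [norm_mul, norm_mul]
    _ ≤ (SchwartzMap.seminorm ℝ 0 0 g) * (((k₀ + k₁) * (1 + |x|))
          * Real.exp (a * R * |x| - a / 2 * x ^ 2 + a / 4 * R ^ 2)) := by
        gcongr
        exact (norm_nonneg _).trans h1
    _ = ((SchwartzMap.seminorm ℝ 0 0 g) * (k₀ + k₁) * Real.exp (a / 4 * R ^ 2))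
        * ((1 + |x|) * Real.exp (a * R * |x| - a / 2 * x ^ 2)) := by
        rw [show a * R * |x| - a / 2 * x ^ 2 + a / 4 * R ^ 2
            = (a / 4 * R ^ 2) + (a * R * |x| - a / 2 * x ^ 2) by ring, Real.exp_add]
        ring

lemma key_integrable (a : ℝ) (ha : 0 < a) (g : SchwartzMap ℝ ℂ) (c₀ c₁ : ℂ) (w : ℂ) :
    Integrable (fun x : ℝ => g x * ((c₀ + c₁ * x) * bk a x w)) := by
  have hint := (integrable_aux (show (0:ℝ) < a / 2 by positivity) (a * ‖w‖)).const_mul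
      ((SchwartzMap.seminorm ℝ 0 0 g) * (‖c₀‖ + ‖c₁‖) * Real.exp (a / 4 * ‖w‖ ^ 2))
  refine hint.mono' ?_ ?_
  · apply Continuous.aestronglyMeasurable
    apply g.continuous.mul
    apply Continuous.mul (by continuity)
    exact Complex.continuous_exp.comp (by continuity)
  · filter_upwards with x
    exact norm_term_le a ha g c₀ c₁ x w le_rfl le_rfl le_rfl

lemma bk_hasDerivAt_z (a : ℝ) (x : ℝ) (w : ℂ) :
    HasDerivAt (fun w : ℂ => bk a x w) (((a : ℂ) * x - (a : ℂ) / 2 * w) * bk a x w) w := by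
  have hA : HasDerivAt (fun w : ℂ => (a : ℂ) * (x : ℂ) * w) ((a : ℂ) * (x : ℂ) * 1) w :=
    (hasDerivAt_id w).const_mul ((a : ℂ) * (x : ℂ))
  have hB := (hasDerivAt_pow 2 w).const_mul ((a : ℂ) / 4)
  have h0 := (hA.sub_const ((a : ℂ) / 2 * (x : ℂ) ^ 2)).sub hB
  have h1 := h0.cexp
  refine h1.congr_deriv ?_
  simp only [bk, Pi.sub_apply]
  push_cast
  ring

lemma bk_hasDerivAt_x (a : ℝ) (x : ℝ) (w : ℂ) :
    HasDerivAt (fun x : ℝ => bk a x w) (((a : ℂ) * w - (a : ℂ) * x) * bk a x w) x := by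
  have h0 : HasDerivAt (fun x : ℝ => (x : ℂ)) 1 x := by
    exact (hasDerivAt_id x).ofReal_comp
  have hA := (h0.const_mul (a : ℂ)).mul_const w
  have hsq := h0.mul h0
  have hB := hsq.const_mul ((a : ℂ) / 2)
  have h1 := ((hA.sub hB).sub_const ((a : ℂ) / 4 * w ^ 2)).cexp
  have hfun : (fun x : ℝ => Complex.exp ((a : ℂ) * x * w - (a : ℂ) / 2 * ((x : ℂ) * (x : ℂ))
      - (a : ℂ) / 4 * w ^ 2)) = fun x : ℝ => bk a x w := by
    funext y
    simp only [bk]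
    rw [← pow_two]
  simp only [Pi.mul_apply, Pi.sub_apply] at h1
  rw [hfun] at h1
  convert h1 using 1
  simp only [bk]
  rw [← pow_two ((x : ℂ))]
  ring

lemma bargmann_eq (a : ℝ) (h : ℝ → ℂ) (w : ℂ) :
    bargmann a h w = (((a / Real.pi) ^ ((1 : ℝ) / 4) : ℝ) : ℂ) * ∫ x : ℝ, h x * bk a x w :=
  rfl

end

/-- Bargmann transform of f': [B_{a/2}(f')](z) = (B f)'(z) - (a/2) z (B f)(z) for Schwartz f. -/
theorem bargmann_deriv (a : ℝ) (ha : 0 < a) (f : SchwartzMap ℝ ℂ) (z : ℂ) :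
    bargmann a (fun x : ℝ => deriv (fun y : ℝ => f y) x) z =
      deriv (bargmann a (fun x : ℝ => f x)) z
        - ((a : ℂ) / 2) * z * bargmann a (fun x : ℝ => f x) z := by
  classical
  set g : SchwartzMap ℝ ℂ := SchwartzMap.derivCLM ℝ ℂ f with hg
  have hderiv_eq : (fun x : ℝ => deriv (fun y : ℝ => f y) x) = fun x : ℝ => g x := by
    funext x
    simp [hg, SchwartzMap.derivCLM_apply]
  set C : ℂ := (((a / Real.pi) ^ ((1 : ℝ) / 4) : ℝ) : ℂ) with hCdef
  set R : ℝ := ‖z‖ + 1 with hRdef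
  -- Step 1: differentiation under the integral sign
  have hdom := hasDerivAt_integral_of_dominated_loc_of_deriv_le (𝕜 := ℂ) (μ := volume)
    (F := fun (w : ℂ) (x : ℝ) => f x * bk a x w)
    (F' := fun (w : ℂ) (x : ℝ) => f x * (((a : ℂ) * x - (a : ℂ) / 2 * w) * bk a x w))
    (x₀ := z)
    (bound := fun x : ℝ => ((SchwartzMap.seminorm ℝ 0 0 f) * (a / 2 * R + a)
      * Real.exp (a / 4 * R ^ 2)) * ((1 + |x|) * Real.exp (a * R * |x| - a / 2 * x ^ 2)))
    (s := ball z 1) (ball_mem_nhds z one_pos)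
    (Eventually.of_forall fun w => by
      apply Continuous.aestronglyMeasurable
      apply f.continuous.mul
      simp only [bk]
      exact Complex.continuous_exp.comp (by fun_prop))
    (by simpa using key_integrable a ha f 1 0 z)
    (by
      apply Continuous.aestronglyMeasurable
      apply f.continuous.mul
      apply Continuous.mul (by fun_prop)
      simp only [bk]
      exact Complex.continuous_exp.comp (by fun_prop))
    (Eventually.of_forall fun x => by
      intro w hw
      show ‖f x * (((a : ℂ) * x - (a : ℂ) / 2 * w) * bk a x w)‖
        ≤ ((SchwartzMap.seminorm ℝ 0 0 f) * (a / 2 * R + a)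
          * Real.exp (a / 4 * R ^ 2)) * ((1 + |x|) * Real.exp (a * R * |x| - a / 2 * x ^ 2))
      have hwR : ‖w‖ ≤ R := by
        have : dist w z < 1 := mem_ball.1 hw
        calc ‖w‖ = ‖z + (w - z)‖ := by ring_nf
          _ ≤ ‖z‖ + ‖w - z‖ := norm_add_le _ _
          _ ≤ ‖z‖ + 1 := by
              have : ‖w - z‖ ≤ 1 := by
                rw [← dist_eq_norm]; exact this.le
              linarith
      have heq : ((a : ℂ) * x - (a : ℂ) / 2 * w) = (-((a : ℂ) / 2 * w) + (a : ℂ) * x) := by ring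
      rw [heq]
      have hk₀ : ‖-((a : ℂ) / 2 * w)‖ ≤ a / 2 * R := by
        rw [norm_neg, norm_mul]
        have h1 : ‖(a : ℂ) / 2‖ = a / 2 := by
          rw [norm_div]
          simp [Complex.norm_real, Real.norm_eq_abs, abs_of_pos ha]
        rw [h1]
        exact mul_le_mul_of_nonneg_left hwR (by positivity)
      have hk₁ : ‖(a : ℂ)‖ ≤ a := by
        simp [Complex.norm_real, Real.norm_eq_abs, abs_of_pos ha]
      exact norm_term_le a ha f (-((a : ℂ) / 2 * w)) (a : ℂ) x w hwR hk₀ hk₁)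
    ((integrable_aux (show (0:ℝ) < a / 2 by positivity) (a * R)).const_mul _)
    (Eventually.of_forall fun x w _ => (bk_hasDerivAt_z a x w).const_mul (f x))
  have hBder : HasDerivAt (bargmann a (fun x : ℝ => f x))
      (C * ∫ x : ℝ, f x * (((a : ℂ) * x - (a : ℂ) / 2 * z) * bk a x z)) z := by
    have h := hdom.2.const_mul C
    exact h
  -- Step 2: integration by parts
  have hv : ∀ x : ℝ, HasDerivAt (fun y : ℝ => f y) (g x) x := by
    intro x
    simpa [hg, SchwartzMap.derivCLM_apply] using f.differentiableAt.hasDerivAt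
  have huv' : Integrable ((fun x : ℝ => bk a x z) * fun x : ℝ => g x) := by
    refine (key_integrable a ha g 1 0 z).congr (Eventually.of_forall fun x => ?_)
    simp only [Pi.mul_apply]
    ring
  have hu'v : Integrable ((fun x : ℝ => ((a : ℂ) * z - (a : ℂ) * x) * bk a x z)
      * fun x : ℝ => f x) := by
    refine (key_integrable a ha f ((a : ℂ) * z) (-(a : ℂ)) z).congr
      (Eventually.of_forall fun x => ?_)
    simp only [Pi.mul_apply]
    ring
  have huv : Integrable ((fun x : ℝ => bk a x z) * fun x : ℝ => f x) := by
    refine (key_integrable a ha f 1 0 z).congr (Eventually.of_forall fun x => ?_)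
    simp only [Pi.mul_apply]
    ring
  have hibp := MeasureTheory.integral_mul_deriv_eq_deriv_mul_of_integrable
    (u := fun x : ℝ => bk a x z) (v := fun y : ℝ => f y)
    (u' := fun x : ℝ => ((a : ℂ) * z - (a : ℂ) * x) * bk a x z) (v' := fun x : ℝ => g x)
    (fun x _ => bk_hasDerivAt_x a x z) (fun x _ => hv x) huv' hu'v huv
  -- hibp : ∫ x, bk a x z * g x = - ∫ x, (((a)z - (a)x) * bk) * f x
  have hibp' : ∫ x : ℝ, g x * bk a x z
      = ∫ x : ℝ, f x * (((a : ℂ) * x - (a : ℂ) * z) * bk a x z) := by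
    calc ∫ x : ℝ, g x * bk a x z = ∫ x : ℝ, bk a x z * g x := by
          congr 1; funext x; ring
      _ = - ∫ x : ℝ, (((a : ℂ) * z - (a : ℂ) * x) * bk a x z) * f x := hibp
      _ = ∫ x : ℝ, -((((a : ℂ) * z - (a : ℂ) * x) * bk a x z) * f x) := by
          rw [integral_neg]
      _ = ∫ x : ℝ, f x * (((a : ℂ) * x - (a : ℂ) * z) * bk a x z) := by
          congr 1; funext x; ring
  -- Step 3: combine
  have hsplit : ∫ x : ℝ, f x * (((a : ℂ) * x - (a : ℂ) * z) * bk a x z)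
      = (∫ x : ℝ, f x * (((a : ℂ) * x - (a : ℂ) / 2 * z) * bk a x z))
        - (a : ℂ) / 2 * z * ∫ x : ℝ, f x * bk a x z := by
    have h1 : Integrable (fun x : ℝ => f x * (((a : ℂ) * x - (a : ℂ) / 2 * z) * bk a x z)) := by
      refine (key_integrable a ha f (-((a : ℂ) / 2 * z)) (a : ℂ) z).congr
        (Eventually.of_forall fun x => ?_)
      ring
    have h2 : Integrable (fun x : ℝ => (a : ℂ) / 2 * z * (f x * bk a x z)) := by
      refine ((key_integrable a ha f 1 0 z).const_mul ((a : ℂ) / 2 * z)).congr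
        (Eventually.of_forall fun x => ?_)
      ring
    rw [← integral_const_mul, ← integral_sub h1 h2]
    congr 1; funext x; ring
  rw [hderiv_eq, hBder.deriv, bargmann_eq, bargmann_eq, hibp', hsplit, hCdef]
  ring
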